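/- arXiv:2603.15783 — 2 statements merged into one kernel-verified Lean document; each statement's English description precedes it below -/
import Mathlib

section
/- Let (Ω, μ) be a probability space, K, M ≥ 1, and for each k = 1,…,K let B_k ∈ ℂ^{M×M}, let A_k : ℝ³ → ℂ^{M×M} be twice continuously differentiable, and let Ξ_k : Ω → ℂ^{M×M} be a random matrix whose entries are integrable with entrywise expectation E[Ξ_k] = A_k(v₀) B_k at a fixed point v₀ ∈ ℝ³. Define f : ℝ³ × Ω → ℝ by f(v, ω) = Σ_{k=1}^K ‖Ξ_k(ω) − A_k(v) B_k‖_F². Then for all coordinate indices i, j ∈ {1,2,3}, the expectation of the second partial derivative satisfies E[ (∂²f/∂v_i ∂v_j)(v₀, ·) ] = 2 Σ_{k=1}^K Re tr( (∂A_k/∂v_i)(v₀) · B_k B_kᴴ · ((∂A_k/∂v_j)(v₀))ᴴ ). (With B_k the positive semidefinite square root of C_k C_kᴴ, so that B_k B_kᴴ = C_k C_kᴴ, this gives the Fisher information matrix entries [J(v)]_{ij} = Σ_k tr(A_k^i(v) C_k C_kᴴ A_k^j(v)ᴴ) of Theorem 1, up to the real-parameter normalization constant.) -/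
open Matrix MeasureTheory BigOperators

attribute [local instance] Matrix.normedAddCommGroup Matrix.normedSpace

/-- Partial derivative of a real-valued function on `ℝ³` along the `i`-th
standard basis vector. -/
noncomputable def pd (i : Fin 3) (f : (Fin 3 → ℝ) → ℝ) (v : Fin 3 → ℝ) : ℝ :=
  fderiv ℝ f v (Pi.single i 1)

/-- Partial derivative of a matrix-valued function on `ℝ³` along the `i`-th
standard basis vector. -/
noncomputable def mpd {M : ℕ} (i : Fin 3)
    (A : (Fin 3 → ℝ) → Matrix (Fin M) (Fin M) ℂ) (v : Fin 3 → ℝ) :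
    Matrix (Fin M) (Fin M) ℂ :=
  fderiv ℝ A v (Pi.single i 1)

lemma pd_sq_eq {u : (Fin 3 → ℝ) → ℝ} (hu : ContDiff ℝ 2 u) (c : ℝ) (j : Fin 3) :
    pd j (fun v => (c - u v) ^ 2) = fun v => -(2 * (c - u v) * pd j u v) := by
  funext v
  have hdu : HasFDerivAt u (fderiv ℝ u v) v :=
    (hu.differentiable two_ne_zero).differentiableAt.hasFDerivAt
  have h1 : HasFDerivAt (fun v => c - u v) (-(fderiv ℝ u v)) v :=
    by simpa using (hasFDerivAt_const c v).fun_sub hdu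
  have h3 : HasFDerivAt (fun v => (c - u v) ^ 2)
      ((c - u v) • -fderiv ℝ u v + (c - u v) • -fderiv ℝ u v) v := by
    simpa [sq] using h1.fun_mul h1
  rw [pd, h3.fderiv]
  simp only [ContinuousLinearMap.add_apply, ContinuousLinearMap.coe_smul',
    ContinuousLinearMap.neg_apply, Pi.smul_apply, smul_eq_mul, pd]
  ring

lemma contDiff_pd {u : (Fin 3 → ℝ) → ℝ} (hu : ContDiff ℝ 2 u) (j : Fin 3) :
    ContDiff ℝ 1 (fun v => pd j u v) :=
  (hu.fderiv_right (m := 1) le_rfl).clm_apply contDiff_const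

lemma pd_pd_sq {u : (Fin 3 → ℝ) → ℝ} (hu : ContDiff ℝ 2 u) (c : ℝ) (i j : Fin 3)
    (v₀ : Fin 3 → ℝ) :
    pd i (pd j (fun v => (c - u v) ^ 2)) v₀
      = 2 * (pd i u v₀ * pd j u v₀) - 2 * (c - u v₀) * pd i (pd j u) v₀ := by
  rw [pd_sq_eq hu c j]
  have heq : (fun v => -(2 * (c - u v) * pd j u v))
      = fun v => (-2 : ℝ) * ((c - u v) * pd j u v) := by funext v; ring
  rw [heq]
  have hdu : HasFDerivAt u (fderiv ℝ u v₀) v₀ :=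
    (hu.differentiable two_ne_zero).differentiableAt.hasFDerivAt
  have hdg : HasFDerivAt (fun v => pd j u v) (fderiv ℝ (fun v => pd j u v) v₀) v₀ :=
    ((contDiff_pd hu j).differentiable one_ne_zero).differentiableAt.hasFDerivAt
  have h1 : HasFDerivAt (fun v => c - u v) (-(fderiv ℝ u v₀)) v₀ :=
    by simpa using (hasFDerivAt_const c v₀).fun_sub hdu
  have h3 := (h1.fun_mul hdg).const_mul (-2 : ℝ)
  rw [pd, h3.fderiv]
  simp only [ContinuousLinearMap.add_apply, ContinuousLinearMap.coe_smul',
    ContinuousLinearMap.neg_apply, Pi.smul_apply, smul_eq_mul, pd]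
  rw [show (pd j u) = (fun v => (fderiv ℝ u v) (Pi.single j 1)) from rfl]
  ring

lemma pd_sum {ι : Type*} (s : Finset ι) (F : ι → (Fin 3 → ℝ) → ℝ) (i : Fin 3)
    (v : Fin 3 → ℝ) (hF : ∀ m ∈ s, DifferentiableAt ℝ (F m) v) :
    pd i (fun v => ∑ m ∈ s, F m v) v = ∑ m ∈ s, pd i (F m) v := by
  unfold pd
  rw [fderiv_fun_sum hF]
  simp

lemma pd_add_at {f g : (Fin 3 → ℝ) → ℝ} {v : Fin 3 → ℝ}
    (hf : DifferentiableAt ℝ f v) (hg : DifferentiableAt ℝ g v) (i : Fin 3) :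
    pd i (fun x => f x + g x) v = pd i f v + pd i g v := by
  unfold pd
  rw [fderiv_fun_add hf hg]
  simp

lemma diff_sq {u : (Fin 3 → ℝ) → ℝ} (hu : ContDiff ℝ 2 u) (c : ℝ) :
    Differentiable ℝ (fun v => (c - u v) ^ 2) :=
  ((differentiable_const c).sub (hu.differentiable two_ne_zero)).pow 2

lemma diff_pd_sq {u : (Fin 3 → ℝ) → ℝ} (hu : ContDiff ℝ 2 u) (c : ℝ) (j : Fin 3) :
    Differentiable ℝ (pd j (fun v => (c - u v) ^ 2)) := by
  rw [pd_sq_eq hu c j]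
  exact ((((differentiable_const c).sub (hu.differentiable two_ne_zero)).const_mul 2).mul
    ((contDiff_pd hu j).differentiable one_ne_zero)).neg

lemma pd_pd_two_sq {u w : (Fin 3 → ℝ) → ℝ} (hu : ContDiff ℝ 2 u) (hw : ContDiff ℝ 2 w)
    (c₁ c₂ : ℝ) (i j : Fin 3) (v₀ : Fin 3 → ℝ) :
    pd i (pd j (fun v => (c₁ - u v) ^ 2 + (c₂ - w v) ^ 2)) v₀
      = (2 * (pd i u v₀ * pd j u v₀) - 2 * (c₁ - u v₀) * pd i (pd j u) v₀)
        + (2 * (pd i w v₀ * pd j w v₀) - 2 * (c₂ - w v₀) * pd i (pd j w) v₀) := by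
  have e1 : pd j (fun v => (c₁ - u v) ^ 2 + (c₂ - w v) ^ 2)
      = fun v => pd j (fun v => (c₁ - u v) ^ 2) v + pd j (fun v => (c₂ - w v) ^ 2) v := by
    funext v
    exact pd_add_at ((diff_sq hu c₁).differentiableAt) ((diff_sq hw c₂).differentiableAt) j
  rw [e1,
    pd_add_at ((diff_pd_sq hu c₁ j).differentiableAt) ((diff_pd_sq hw c₂ j).differentiableAt) i,
    pd_pd_sq hu c₁ i j v₀, pd_pd_sq hw c₂ i j v₀]

lemma pd_pd_sum_two_sq {ι : Type*} [Fintype ι] (u w : ι → (Fin 3 → ℝ) → ℝ)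
    (hu : ∀ m, ContDiff ℝ 2 (u m)) (hw : ∀ m, ContDiff ℝ 2 (w m))
    (c₁ c₂ : ι → ℝ) (i j : Fin 3) (v₀ : Fin 3 → ℝ) :
    pd i (pd j (fun v => ∑ m, ((c₁ m - u m v) ^ 2 + (c₂ m - w m v) ^ 2))) v₀
      = ∑ m, ((2 * (pd i (u m) v₀ * pd j (u m) v₀)
              - 2 * (c₁ m - u m v₀) * pd i (pd j (u m)) v₀)
            + (2 * (pd i (w m) v₀ * pd j (w m) v₀)
              - 2 * (c₂ m - w m v₀) * pd i (pd j (w m)) v₀)) := by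
  have e1 : pd j (fun v => ∑ m, ((c₁ m - u m v) ^ 2 + (c₂ m - w m v) ^ 2))
      = fun v => ∑ m, pd j (fun v => (c₁ m - u m v) ^ 2 + (c₂ m - w m v) ^ 2) v := by
    funext v
    exact pd_sum Finset.univ _ j v fun m _ =>
      ((diff_sq (hu m) (c₁ m)).add (diff_sq (hw m) (c₂ m))).differentiableAt
  rw [e1]
  rw [pd_sum Finset.univ _ i v₀ ?_]
  · exact Finset.sum_congr rfl fun m _ => pd_pd_two_sq (hu m) (hw m) (c₁ m) (c₂ m) i j v₀
  · intro m _
    have e2 : pd j (fun v => (c₁ m - u m v) ^ 2 + (c₂ m - w m v) ^ 2)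
        = fun v => pd j (fun v => (c₁ m - u m v) ^ 2) v
          + pd j (fun v => (c₂ m - w m v) ^ 2) v := by
      funext v
      exact pd_add_at ((diff_sq (hu m) (c₁ m)).differentiableAt)
        ((diff_sq (hw m) (c₂ m)).differentiableAt) j
    rw [e2]
    exact ((diff_pd_sq (hu m) (c₁ m) j).add (diff_pd_sq (hw m) (c₂ m) j)).differentiableAt

lemma norm_sq_entry (z g : ℂ) : ‖z - g‖ ^ 2 = (z.re - g.re) ^ 2 + (z.im - g.im) ^ 2 := by
  rw [← Complex.sub_re, ← Complex.sub_im]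
  rw [Complex.sq_norm, Complex.normSq_apply]
  ring

lemma integral_affine_pair {Ω : Type*} [MeasurableSpace Ω] {μ : Measure Ω}
    [IsProbabilityMeasure μ] {c d : Ω → ℝ} (hc : Integrable c μ) (hd : Integrable d μ)
    {b e : ℝ} (hcb : ∫ ω, c ω ∂μ = b) (hde : ∫ ω, d ω ∂μ = e) (a₁ a₂ s₁ s₂ : ℝ) :
    ∫ ω, ((a₁ - 2 * (c ω - b) * s₁) + (a₂ - 2 * (d ω - e) * s₂)) ∂μ = a₁ + a₂ := by
  have hc1 : Integrable (fun ω => 2 * (c ω - b) * s₁) μ :=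
    (((hc.sub (integrable_const b)).const_mul 2).mul_const s₁)
  have hd1 : Integrable (fun ω => 2 * (d ω - e) * s₂) μ :=
    (((hd.sub (integrable_const e)).const_mul 2).mul_const s₂)
  have hf1 : Integrable (fun ω => a₁ - 2 * (c ω - b) * s₁) μ := (integrable_const a₁).sub hc1
  have hf2 : Integrable (fun ω => a₂ - 2 * (d ω - e) * s₂) μ := (integrable_const a₂).sub hd1
  rw [integral_add hf1 hf2, integral_sub (integrable_const a₁) hc1,
    integral_sub (integrable_const a₂) hd1]
  have h1 : ∫ ω, 2 * (c ω - b) * s₁ ∂μ = 0 := by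
    rw [integral_mul_const, integral_const_mul, integral_sub hc (integrable_const b)]
    simp [hcb]
  have h2 : ∫ ω, 2 * (d ω - e) * s₂ ∂μ = 0 := by
    rw [integral_mul_const, integral_const_mul, integral_sub hd (integrable_const e)]
    simp [hde]
  simp [h1, h2]

lemma trace_re_eq_aux {M : ℕ} (R S : Matrix (Fin M) (Fin M) ℂ) :
    (Matrix.trace (R * Sᴴ)).re
      = ∑ p, ∑ q, ((R p q).re * (S p q).re + (R p q).im * (S p q).im) := by
  rw [Matrix.trace, Complex.re_sum]
  refine Finset.sum_congr rfl fun p _ => ?_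
  simp only [Matrix.diag_apply, Matrix.mul_apply, Matrix.conjTranspose_apply]
  rw [Complex.re_sum]
  refine Finset.sum_congr rfl fun q _ => ?_
  simp [Complex.mul_re]

lemma trace_re_eq {M : ℕ} (P Q Bm : Matrix (Fin M) (Fin M) ℂ) :
    (Matrix.trace (P * (Bm * Bmᴴ) * Qᴴ)).re
      = ∑ p, ∑ q, (((P * Bm) p q).re * ((Q * Bm) p q).re
          + ((P * Bm) p q).im * ((Q * Bm) p q).im) := by
  have h : P * (Bm * Bmᴴ) * Qᴴ = (P * Bm) * (Q * Bm)ᴴ := by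
    simp only [Matrix.conjTranspose_mul, Matrix.mul_assoc]
  rw [h, trace_re_eq_aux]



noncomputable def mulEntryCLM {M : ℕ} (B : Matrix (Fin M) (Fin M) ℂ) (p q : Fin M) :
    Matrix (Fin M) (Fin M) ℂ →L[ℝ] ℂ :=
  LinearMap.toContinuousLinearMap
    { toFun := fun X => (X * B) p q
      map_add' := by intro X Y; simp [Matrix.add_mul]
      map_smul' := by intro c X; simp [Matrix.smul_mul] }

@[simp] lemma mulEntryCLM_apply {M : ℕ} (B : Matrix (Fin M) (Fin M) ℂ) (p q : Fin M)
    (X : Matrix (Fin M) (Fin M) ℂ) : mulEntryCLM B p q X = (X * B) p q := rfl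

lemma contDiff_re_entry {M : ℕ} {A : (Fin 3 → ℝ) → Matrix (Fin M) (Fin M) ℂ}
    (hA : ContDiff ℝ 2 A) (B : Matrix (Fin M) (Fin M) ℂ) (p q : Fin M) :
    ContDiff ℝ 2 (fun v => ((A v * B) p q).re) :=
  Complex.reCLM.contDiff.comp ((mulEntryCLM B p q).contDiff.comp hA)

lemma contDiff_im_entry {M : ℕ} {A : (Fin 3 → ℝ) → Matrix (Fin M) (Fin M) ℂ}
    (hA : ContDiff ℝ 2 A) (B : Matrix (Fin M) (Fin M) ℂ) (p q : Fin M) :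
    ContDiff ℝ 2 (fun v => ((A v * B) p q).im) :=
  Complex.imCLM.contDiff.comp ((mulEntryCLM B p q).contDiff.comp hA)

lemma pd_re_entry {M : ℕ} {A : (Fin 3 → ℝ) → Matrix (Fin M) (Fin M) ℂ}
    (hA : ContDiff ℝ 2 A) (B : Matrix (Fin M) (Fin M) ℂ) (p q : Fin M)
    (i : Fin 3) (v₀ : Fin 3 → ℝ) :
    pd i (fun v => ((A v * B) p q).re) v₀ = ((mpd i A v₀ * B) p q).re := by
  have hAd : HasFDerivAt A (fderiv ℝ A v₀) v₀ :=
    (hA.differentiable two_ne_zero).differentiableAt.hasFDerivAt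
  set L : Matrix (Fin M) (Fin M) ℂ →L[ℝ] ℝ := Complex.reCLM.comp (mulEntryCLM B p q)
  have h : HasFDerivAt (fun v => ((A v * B) p q).re) (L.comp (fderiv ℝ A v₀)) v₀ :=
    (L.hasFDerivAt.comp v₀ hAd : )
  rw [pd, h.fderiv]
  rfl

lemma pd_im_entry {M : ℕ} {A : (Fin 3 → ℝ) → Matrix (Fin M) (Fin M) ℂ}
    (hA : ContDiff ℝ 2 A) (B : Matrix (Fin M) (Fin M) ℂ) (p q : Fin M)
    (i : Fin 3) (v₀ : Fin 3 → ℝ) :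
    pd i (fun v => ((A v * B) p q).im) v₀ = ((mpd i A v₀ * B) p q).im := by
  have hAd : HasFDerivAt A (fderiv ℝ A v₀) v₀ :=
    (hA.differentiable two_ne_zero).differentiableAt.hasFDerivAt
  set L : Matrix (Fin M) (Fin M) ℂ →L[ℝ] ℝ := Complex.imCLM.comp (mulEntryCLM B p q)
  have h : HasFDerivAt (fun v => ((A v * B) p q).im) (L.comp (fderiv ℝ A v₀)) v₀ :=
    (L.hasFDerivAt.comp v₀ hAd : )
  rw [pd, h.fderiv]
  rfl



/-- **Theorem 1 (Fisher information).** With `f(v, ω) = Σ_k ‖Ξ_k(ω) − A_k(v) B_k‖_F²`,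
`A_k` twice continuously differentiable, and entrywise integrable `Ξ_k` satisfying
`E[Ξ_k] = A_k(v₀) B_k`, the expected Hessian at `v₀` is
`E[∂²f/∂v_i∂v_j (v₀, ·)] = 2 Σ_k Re tr(∂_i A_k(v₀) · B_k B_kᴴ · (∂_j A_k(v₀))ᴴ)`. -/
theorem expected_hessian_fisher_information (K M : ℕ) (hK : 1 ≤ K) (hM : 1 ≤ M)
    {Ω : Type*} [MeasurableSpace Ω] (μ : Measure Ω) [IsProbabilityMeasure μ]
    (B : Fin K → Matrix (Fin M) (Fin M) ℂ)
    (A : Fin K → (Fin 3 → ℝ) → Matrix (Fin M) (Fin M) ℂ)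
    (hA : ∀ k, ContDiff ℝ 2 (A k))
    (Ξ : Fin K → Ω → Matrix (Fin M) (Fin M) ℂ)
    (hΞInt : ∀ k p q, Integrable (fun ω => Ξ k ω p q) μ)
    (v₀ : Fin 3 → ℝ)
    (hmean : ∀ k p q, ∫ ω, Ξ k ω p q ∂μ = (A k v₀ * B k) p q)
    (f : (Fin 3 → ℝ) → Ω → ℝ)
    (hf : ∀ v ω, f v ω = ∑ k, ∑ p, ∑ q, ‖(Ξ k ω - A k v * B k) p q‖ ^ 2)
    (i j : Fin 3) :
    ∫ ω, pd i (pd j (fun v => f v ω)) v₀ ∂μ =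
      2 * (∑ k, Matrix.trace
        (mpd i (A k) v₀ * (B k * (B k)ᴴ) * (mpd j (A k) v₀)ᴴ)).re := by
  classical
  have hU : ∀ m : Fin K × Fin M × Fin M,
      ContDiff ℝ 2 (fun v => ((A m.1 v * B m.1) m.2.1 m.2.2).re) :=
    fun m => contDiff_re_entry (hA m.1) (B m.1) m.2.1 m.2.2
  have hW : ∀ m : Fin K × Fin M × Fin M,
      ContDiff ℝ 2 (fun v => ((A m.1 v * B m.1) m.2.1 m.2.2).im) :=
    fun m => contDiff_im_entry (hA m.1) (B m.1) m.2.1 m.2.2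
  have key : ∀ ω : Ω, pd i (pd j (fun v => f v ω)) v₀ =
      ∑ m : Fin K × Fin M × Fin M,
        ((2 * (pd i (fun v => ((A m.1 v * B m.1) m.2.1 m.2.2).re) v₀
              * pd j (fun v => ((A m.1 v * B m.1) m.2.1 m.2.2).re) v₀)
          - 2 * ((Ξ m.1 ω m.2.1 m.2.2).re - ((A m.1 v₀ * B m.1) m.2.1 m.2.2).re)
              * pd i (pd j (fun v => ((A m.1 v * B m.1) m.2.1 m.2.2).re)) v₀)
        + (2 * (pd i (fun v => ((A m.1 v * B m.1) m.2.1 m.2.2).im) v₀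
              * pd j (fun v => ((A m.1 v * B m.1) m.2.1 m.2.2).im) v₀)
          - 2 * ((Ξ m.1 ω m.2.1 m.2.2).im - ((A m.1 v₀ * B m.1) m.2.1 m.2.2).im)
              * pd i (pd j (fun v => ((A m.1 v * B m.1) m.2.1 m.2.2).im)) v₀)) := by
    intro ω
    have hfe : (fun v => f v ω) = fun v => ∑ m : Fin K × Fin M × Fin M,
        (((Ξ m.1 ω m.2.1 m.2.2).re - ((A m.1 v * B m.1) m.2.1 m.2.2).re) ^ 2
          + ((Ξ m.1 ω m.2.1 m.2.2).im - ((A m.1 v * B m.1) m.2.1 m.2.2).im) ^ 2) := by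
      funext v
      rw [hf]
      rw [Fintype.sum_prod_type]
      refine Finset.sum_congr rfl fun k _ => ?_
      rw [Fintype.sum_prod_type]
      refine Finset.sum_congr rfl fun p _ => ?_
      refine Finset.sum_congr rfl fun q _ => ?_
      rw [Matrix.sub_apply]
      exact norm_sq_entry _ _
    rw [hfe]
    exact pd_pd_sum_two_sq _ _ hU hW _ _ i j v₀
  simp only [key]
  rw [integral_finset_sum]
  · -- compute each integral and match with the trace expression
    have hmeanre : ∀ m : Fin K × Fin M × Fin M,
        ∫ ω, (Ξ m.1 ω m.2.1 m.2.2).re ∂μ = ((A m.1 v₀ * B m.1) m.2.1 m.2.2).re := by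
      intro m
      have h := integral_re (hΞInt m.1 m.2.1 m.2.2)
      simpa [hmean m.1 m.2.1 m.2.2] using h
    have hmeanim : ∀ m : Fin K × Fin M × Fin M,
        ∫ ω, (Ξ m.1 ω m.2.1 m.2.2).im ∂μ = ((A m.1 v₀ * B m.1) m.2.1 m.2.2).im := by
      intro m
      have h := integral_im (hΞInt m.1 m.2.1 m.2.2)
      simpa [hmean m.1 m.2.1 m.2.2] using h
    have hint : ∀ m : Fin K × Fin M × Fin M, (∫ ω,
        ((2 * (pd i (fun v => ((A m.1 v * B m.1) m.2.1 m.2.2).re) v₀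
              * pd j (fun v => ((A m.1 v * B m.1) m.2.1 m.2.2).re) v₀)
          - 2 * ((Ξ m.1 ω m.2.1 m.2.2).re - ((A m.1 v₀ * B m.1) m.2.1 m.2.2).re)
              * pd i (pd j (fun v => ((A m.1 v * B m.1) m.2.1 m.2.2).re)) v₀)
        + (2 * (pd i (fun v => ((A m.1 v * B m.1) m.2.1 m.2.2).im) v₀
              * pd j (fun v => ((A m.1 v * B m.1) m.2.1 m.2.2).im) v₀)
          - 2 * ((Ξ m.1 ω m.2.1 m.2.2).im - ((A m.1 v₀ * B m.1) m.2.1 m.2.2).im)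
              * pd i (pd j (fun v => ((A m.1 v * B m.1) m.2.1 m.2.2).im)) v₀)) ∂μ)
        = 2 * (((mpd i (A m.1) v₀ * B m.1) m.2.1 m.2.2).re
              * ((mpd j (A m.1) v₀ * B m.1) m.2.1 m.2.2).re)
          + 2 * (((mpd i (A m.1) v₀ * B m.1) m.2.1 m.2.2).im
              * ((mpd j (A m.1) v₀ * B m.1) m.2.1 m.2.2).im) := by
      intro m
      have hcre : Integrable (fun ω => (Ξ m.1 ω m.2.1 m.2.2).re) μ := by
        exact (hΞInt m.1 m.2.1 m.2.2).re
      have hcim : Integrable (fun ω => (Ξ m.1 ω m.2.1 m.2.2).im) μ := by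
        exact (hΞInt m.1 m.2.1 m.2.2).im
      rw [integral_affine_pair hcre hcim (hmeanre m) (hmeanim m)]
      rw [pd_re_entry (hA m.1) (B m.1) m.2.1 m.2.2 i v₀,
        pd_re_entry (hA m.1) (B m.1) m.2.1 m.2.2 j v₀,
        pd_im_entry (hA m.1) (B m.1) m.2.1 m.2.2 i v₀,
        pd_im_entry (hA m.1) (B m.1) m.2.1 m.2.2 j v₀]
    rw [Finset.sum_congr rfl fun m _ => hint m]
    rw [Complex.re_sum]
    rw [Finset.sum_congr rfl fun k (_ : k ∈ Finset.univ) =>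
      trace_re_eq (mpd i (A k) v₀) (mpd j (A k) v₀) (B k)]
    rw [Fintype.sum_prod_type]
    simp only [Fintype.sum_prod_type, Finset.mul_sum]
    refine Finset.sum_congr rfl fun k _ => Finset.sum_congr rfl fun p _ =>
      Finset.sum_congr rfl fun q _ => by ring
  · intro m _
    have hcre : Integrable (fun ω => (Ξ m.1 ω m.2.1 m.2.2).re) μ := by
      exact (hΞInt m.1 m.2.1 m.2.2).re
    have hcim : Integrable (fun ω => (Ξ m.1 ω m.2.1 m.2.2).im) μ := by
      exact (hΞInt m.1 m.2.1 m.2.2).im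
    have hc1 : Integrable (fun ω => 2 * ((Ξ m.1 ω m.2.1 m.2.2).re
        - ((A m.1 v₀ * B m.1) m.2.1 m.2.2).re)
        * pd i (pd j (fun v => ((A m.1 v * B m.1) m.2.1 m.2.2).re)) v₀) μ :=
      ((hcre.sub (integrable_const _)).const_mul 2).mul_const _
    have hd1 : Integrable (fun ω => 2 * ((Ξ m.1 ω m.2.1 m.2.2).im
        - ((A m.1 v₀ * B m.1) m.2.1 m.2.2).im)
        * pd i (pd j (fun v => ((A m.1 v * B m.1) m.2.1 m.2.2).im)) v₀) μ :=
      ((hcim.sub (integrable_const _)).const_mul 2).mul_const _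
    exact ((integrable_const _).sub hc1).add ((integrable_const _).sub hd1)
end

section
/- Let K ≥ 1, M, I ≥ 1, and fix T > 0, ε > 0, and noise levels ς_k > 0 for k = 1,…,K. Let C_k ∈ ℂ^{M×I} and, for each i ∈ {1,2,3} and each k, let A_k^i ∈ ℂ^{M×M} be matrices satisfying Σ_{i=1}^{3} ‖A_k^i‖_F² ≤ T/(ε ς_k²) for every k. Define the 3×3 matrix J by [J]_{ij} = Σ_{k=1}^K tr(A_k^i C_k C_kᴴ (A_k^j)ᴴ), and set E = Σ_{k=1}^K ‖C_k‖_F² and σ̄² = (Σ_{k=1}^K ς_k^{-2})^{-1}. If J is Hermitian positive definite and E > 0, then Re tr(J⁻¹) ≥ 9 ε σ̄² / (T · E). In particular, with ϱ = 9ε, the Cramér–Rao bound tr(J⁻¹) is bounded below by the universal quantity CRB_L = ϱ σ̄² / (T · Σ_k ‖C_k‖_F²), which does not depend on the target position. -/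
open Matrix BigOperators
open scoped ComplexOrder

/-- Frobenius norm of a complex matrix. -/
noncomputable def frobNorm {m n : ℕ} (A : Matrix (Fin m) (Fin n) ℂ) : ℝ :=
  Real.sqrt (∑ i, ∑ j, ‖A i j‖ ^ 2)

lemma frobNorm_sq {m n : ℕ} (A : Matrix (Fin m) (Fin n) ℂ) :
    frobNorm A ^ 2 = ∑ i, ∑ j, ‖A i j‖ ^ 2 := by
  rw [frobNorm, Real.sq_sqrt]
  positivity

lemma aux_trace_re {m n : ℕ} (M : Matrix (Fin m) (Fin n) ℂ) :
    (Matrix.trace (M * Mᴴ)).re = ∑ i, ∑ j, ‖M i j‖ ^ 2 := by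
  simp only [Matrix.trace, Matrix.diag_apply, Matrix.mul_apply, Matrix.conjTranspose_apply,
    Complex.mul_conj, Complex.re_sum, Complex.ofReal_re]
  congr 1; funext i; congr 1; funext j
  rw [show star (M i j) = starRingEnd ℂ (M i j) from rfl, Complex.mul_conj, Complex.ofReal_re,
    Complex.normSq_eq_norm_sq]

lemma aux_frob_submul {m n p : ℕ} (A : Matrix (Fin m) (Fin n) ℂ) (C : Matrix (Fin n) (Fin p) ℂ) :
    ∑ i, ∑ j, ‖(A * C) i j‖ ^ 2 ≤ (∑ i, ∑ j, ‖A i j‖ ^ 2) * (∑ i, ∑ j, ‖C i j‖ ^ 2) := by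
  have key : ∀ (i : Fin m) (j : Fin p), ‖(A * C) i j‖ ^ 2 ≤
      (∑ l, ‖A i l‖ ^ 2) * (∑ l, ‖C l j‖ ^ 2) := by
    intro i j
    have h1 : ‖(A * C) i j‖ ≤ ∑ l, ‖A i l‖ * ‖C l j‖ := by
      rw [Matrix.mul_apply]
      refine (norm_sum_le _ _).trans ?_
      apply Finset.sum_le_sum
      intro l _
      exact (norm_mul_le _ _)
    calc ‖(A * C) i j‖ ^ 2 ≤ (∑ l, ‖A i l‖ * ‖C l j‖) ^ 2 := by
          apply sq_le_sq' _ h1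
          linarith [norm_nonneg ((A*C) i j), Finset.sum_nonneg (fun l (_ : l ∈ Finset.univ) =>
            mul_nonneg (norm_nonneg (A i l)) (norm_nonneg (C l j)))]
      _ ≤ _ := Finset.sum_mul_sq_le_sq_mul_sq _ _ _
  calc ∑ i, ∑ j, ‖(A * C) i j‖ ^ 2
      ≤ ∑ i, ∑ j, (∑ l, ‖A i l‖ ^ 2) * (∑ l, ‖C l j‖ ^ 2) := by
        apply Finset.sum_le_sum; intro i _; apply Finset.sum_le_sum; intro j _; exact key i j
    _ = (∑ i, ∑ l, ‖A i l‖ ^ 2) * (∑ j, ∑ l, ‖C l j‖ ^ 2) := by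
        rw [Finset.sum_mul_sum]
    _ = _ := by
        congr 1
        exact Finset.sum_comm

lemma aux_inv_spectral (n : ℕ) (U : Matrix.unitaryGroup (Fin n) ℂ) (d : Fin n → ℂ)
    (hd : ∀ i, d i ≠ 0) :
    ((U : Matrix (Fin n) (Fin n) ℂ) * diagonal d * star (U : Matrix (Fin n) (Fin n) ℂ))⁻¹
      = (U : Matrix (Fin n) (Fin n) ℂ) * diagonal (fun i => (d i)⁻¹)
        * star (U : Matrix (Fin n) (Fin n) ℂ) := by
  apply inv_eq_right_inv
  simp only [mul_assoc]
  rw [← mul_assoc (star (U : Matrix (Fin n) (Fin n) ℂ)) (U : Matrix (Fin n) (Fin n) ℂ),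
    Unitary.coe_star_mul_self, one_mul, ← mul_assoc (diagonal d) (diagonal _),
    diagonal_mul_diagonal]
  have : (fun i => d i * (d i)⁻¹) = fun _ => (1 : ℂ) := by
    funext i; exact mul_inv_cancel₀ (hd i)
  rw [this, diagonal_one, one_mul]
  exact Matrix.mem_unitaryGroup_iff.mp U.2

lemma aux_trace_eig (n : ℕ) (A : Matrix (Fin n) (Fin n) ℂ) (hA : A.IsHermitian) :
    Matrix.trace A = ∑ i, (hA.eigenvalues i : ℂ) := by
  conv_lhs => rw [hA.spectral_theorem, Unitary.conjStarAlgAut_apply]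
  rw [Matrix.trace_mul_cycle, Unitary.coe_star_mul_self, one_mul, Matrix.trace_diagonal]
  rfl

lemma aux_trace_inv_eig (n : ℕ) (A : Matrix (Fin n) (Fin n) ℂ) (hA : A.PosDef) :
    Matrix.trace A⁻¹ = ∑ i, ((hA.1.eigenvalues i : ℂ))⁻¹ := by
  have hpos := hA.eigenvalues_pos
  have h := hA.1.spectral_theorem
  rw [show A⁻¹ = ((hA.1.eigenvectorUnitary : Matrix (Fin n) (Fin n) ℂ) *
      diagonal (RCLike.ofReal ∘ hA.1.eigenvalues) *
      star (hA.1.eigenvectorUnitary : Matrix (Fin n) (Fin n) ℂ))⁻¹ from by rw [Unitary.conjStarAlgAut_apply] at h; rw [← h]]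
  rw [aux_inv_spectral n _ _ (fun i => by
    simp only [Function.comp_apply]
    exact Complex.ofReal_ne_zero.mpr (hpos i).ne')]
  rw [Matrix.trace_mul_cycle, Unitary.coe_star_mul_self, one_mul, Matrix.trace_diagonal]
  simp

/-- **Theorem 2 (universal lower bound on the Cramér–Rao bound).**
If the scaled array-response derivatives satisfy `Σ_i ‖A_k^i‖_F² ≤ T/(ε ς_k²)` and
`[J]_{ij} = Σ_k tr(A_k^i C_k C_kᴴ (A_k^j)ᴴ)` is Hermitian positive definite, then
`Re tr(J⁻¹) ≥ 9 ε σ̄² / (T · E)` with `E = Σ_k ‖C_k‖_F²` and `σ̄² = (Σ_k ς_k⁻²)⁻¹`. -/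
theorem crb_universal_lower_bound (K M I : ℕ) (hK : 1 ≤ K) (hM : 1 ≤ M) (hI : 1 ≤ I)
    (T ε : ℝ) (hT : 0 < T) (hε : 0 < ε)
    (ς : Fin K → ℝ) (hς : ∀ k, 0 < ς k)
    (C : Fin K → Matrix (Fin M) (Fin I) ℂ)
    (A : Fin K → Fin 3 → Matrix (Fin M) (Fin M) ℂ)
    (hA : ∀ k, ∑ i : Fin 3, frobNorm (A k i) ^ 2 ≤ T / (ε * ς k ^ 2))
    (J : Matrix (Fin 3) (Fin 3) ℂ)
    (hJ : ∀ i j : Fin 3,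
      J i j = ∑ k, Matrix.trace (A k i * (C k * (C k)ᴴ) * (A k j)ᴴ))
    (hJpd : J.PosDef)
    (E : ℝ) (hE : E = ∑ k, frobNorm (C k) ^ 2) (hEpos : 0 < E) :
    (Matrix.trace J⁻¹).re ≥ 9 * ε * (∑ k, ((ς k) ^ 2)⁻¹)⁻¹ / (T * E) := by
  classical
  set lam := hJpd.1.eigenvalues with hlam
  have hpos := hJpd.eigenvalues_pos
  set S : ℝ := ∑ k, ((ς k) ^ 2)⁻¹ with hS
  have hSpos : 0 < S := by
    rw [hS]
    apply Finset.sum_pos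
    · intro k _
      exact inv_pos.mpr (pow_pos (hς k) 2)
    · haveI : Nonempty (Fin K) := Fin.pos_iff_nonempty.mp hK
      exact Finset.univ_nonempty
  -- trace J in terms of eigenvalues
  have htrJ : (Matrix.trace J).re = ∑ i, lam i := by
    rw [aux_trace_eig 3 J hJpd.1, Complex.re_sum]
    simp
    rfl
  have htrJinv : (Matrix.trace J⁻¹).re = ∑ i, (lam i)⁻¹ := by
    rw [aux_trace_inv_eig 3 J hJpd, Complex.re_sum]
    congr 1; funext i
    rw [← Complex.ofReal_inv, Complex.ofReal_re]
  -- positivity of trace J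
  have hP : 0 < (Matrix.trace J).re := by
    rw [htrJ]
    exact Finset.sum_pos (fun i _ => hpos i) Finset.univ_nonempty
  have hQ : 0 < (Matrix.trace J⁻¹).re := by
    rw [htrJinv]
    exact Finset.sum_pos (fun i _ => inv_pos.mpr (hpos i)) Finset.univ_nonempty
  -- AM-HM : 9 ≤ trace J * trace J⁻¹
  have hAMHM : (9 : ℝ) ≤ (Matrix.trace J).re * (Matrix.trace J⁻¹).re := by
    rw [htrJ, htrJinv]
    have := Finset.sum_sq_le_sum_mul_sum_of_sq_eq_mul (Finset.univ : Finset (Fin 3))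
      (r := fun _ => (1 : ℝ)) (f := fun i => lam i) (g := fun i => (lam i)⁻¹)
      (fun i _ => (hpos i).le) (fun i _ => (inv_pos.mpr (hpos i)).le)
      (fun i _ => by rw [one_pow, mul_inv_cancel₀ (hpos i).ne'])
    nlinarith [this]
  -- upper bound on trace J
  have hbound : (Matrix.trace J).re ≤ T / ε * E * S := by
    have htr : (Matrix.trace J).re = ∑ i : Fin 3, ∑ k, (Matrix.trace
        ((A k i * C k) * (A k i * C k)ᴴ)).re := by
      have : Matrix.trace J = ∑ i : Fin 3, J i i := rfl
      rw [this, Complex.re_sum]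
      congr 1; funext i
      rw [hJ i i, Complex.re_sum]
      congr 1; funext k
      congr 2
      rw [Matrix.conjTranspose_mul, Matrix.mul_assoc (A k i) (C k) ((C k)ᴴ * (A k i)ᴴ),
        Matrix.mul_assoc (A k i) (C k * (C k)ᴴ) ((A k i)ᴴ),
        Matrix.mul_assoc (C k) ((C k)ᴴ) ((A k i)ᴴ)]
    rw [htr]
    have step1 : ∀ (i : Fin 3) (k : Fin K),
        (Matrix.trace ((A k i * C k) * (A k i * C k)ᴴ)).re ≤
          frobNorm (A k i) ^ 2 * frobNorm (C k) ^ 2 := by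
      intro i k
      rw [aux_trace_re, frobNorm_sq, frobNorm_sq]
      exact aux_frob_submul (A k i) (C k)
    calc ∑ i : Fin 3, ∑ k, (Matrix.trace ((A k i * C k) * (A k i * C k)ᴴ)).re
        ≤ ∑ i : Fin 3, ∑ k, frobNorm (A k i) ^ 2 * frobNorm (C k) ^ 2 := by
          apply Finset.sum_le_sum; intro i _; apply Finset.sum_le_sum; intro k _
          exact step1 i k
      _ = ∑ k, (∑ i : Fin 3, frobNorm (A k i) ^ 2) * frobNorm (C k) ^ 2 := by
          rw [Finset.sum_comm]
          congr 1; funext k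
          rw [Finset.sum_mul]
      _ ≤ ∑ k, (T / (ε * ς k ^ 2)) * E := by
          apply Finset.sum_le_sum; intro k _
          have h1 : frobNorm (C k) ^ 2 ≤ E := by
            rw [hE]
            exact Finset.single_le_sum (fun j _ => sq_nonneg (frobNorm (C j))) (Finset.mem_univ k)
          have h2 : (0:ℝ) ≤ ∑ i : Fin 3, frobNorm (A k i) ^ 2 :=
            Finset.sum_nonneg (fun i _ => sq_nonneg _)
          calc (∑ i : Fin 3, frobNorm (A k i) ^ 2) * frobNorm (C k) ^ 2
              ≤ (T / (ε * ς k ^ 2)) * frobNorm (C k) ^ 2 := by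
                apply mul_le_mul_of_nonneg_right (hA k) (sq_nonneg _)
            _ ≤ (T / (ε * ς k ^ 2)) * E := by
                apply mul_le_mul_of_nonneg_left h1
                positivity
      _ = T / ε * E * S := by
          rw [hS, Finset.mul_sum]
          apply Finset.sum_congr rfl
          intro k _
          field_simp
          try ring
  -- combine
  have hB : 0 < T / ε * E * S := by positivity
  have h9 : (9 : ℝ) ≤ (T / ε * E * S) * (Matrix.trace J⁻¹).re :=
    hAMHM.trans (mul_le_mul_of_nonneg_right hbound hQ.le)
  rw [ge_iff_le, div_le_iff₀ (by positivity)]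
  calc 9 * ε * S⁻¹ = 9 * (ε * S⁻¹) := by ring
    _ ≤ ((T / ε * E * S) * (Matrix.trace J⁻¹).re) * (ε * S⁻¹) := by
        apply mul_le_mul_of_nonneg_right h9
        positivity
    _ = (Matrix.trace J⁻¹).re * (T * E) := by
        field_simp
end
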